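/- If π is a design with M(π) invertible and max_{1≤i≤k} φ_iᵀ M(π)⁻¹ φ_i = d, then π is D-optimal, i.e. det M(π) ≥ det M(π') for every design π'. -/

import Mathlib

open Matrix BigOperators

/-- A design is a probability vector over the `k` candidate points. -/
def IsDesign {k : ℕ} (π : Fin k → ℝ) : Prop :=
  (∀ i, 0 ≤ π i) ∧ ∑ i, π i = 1

/-- The information matrix `M(π) = ∑ i, π i • φ i φ iᵀ` of a design. -/
noncomputable def infoMatrix {d k : ℕ} (φ : Fin k → (Fin d → ℝ)) (π : Fin k → ℝ) :
    Matrix (Fin d) (Fin d) ℝ :=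
  ∑ i, π i • vecMulVec (φ i) (φ i)

section Aux

variable {d : ℕ}

lemma dot_vecMulVec_mulVec (u x : Fin d → ℝ) :
    x ⬝ᵥ (vecMulVec u u *ᵥ x) = (u ⬝ᵥ x) ^ 2 := by
  simp [dotProduct, vecMulVec_apply, mulVec, Finset.mul_sum, Finset.sum_mul, pow_two,
    Finset.sum_mul_sum]
  congr 1; ext j; congr 1; ext l; ring

lemma vecMulVec_posSemidef (u : Fin d → ℝ) : (vecMulVec u u).PosSemidef := by
  refine PosSemidef.of_dotProduct_mulVec_nonneg ?_ ?_
  · ext i j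
    simp [conjTranspose_apply, vecMulVec_apply, mul_comm]
  · intro x
    have hst : star x = x := rfl
    rw [hst, dot_vecMulVec_mulVec]
    positivity

lemma smul_posSemidef {A : Matrix (Fin d) (Fin d) ℝ} (hA : A.PosSemidef) {c : ℝ} (hc : 0 ≤ c) :
    (c • A).PosSemidef := by
  refine PosSemidef.of_dotProduct_mulVec_nonneg ?_ ?_
  · unfold Matrix.IsHermitian
    rw [conjTranspose_smul, hA.1]
    simp
  · intro x
    rw [smul_mulVec, dotProduct_smul]
    exact mul_nonneg hc (hA.dotProduct_mulVec_nonneg x)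

lemma infoMatrix_posSemidef {k : ℕ} (φ : Fin k → (Fin d → ℝ)) (π : Fin k → ℝ)
    (h : ∀ i, 0 ≤ π i) : (infoMatrix φ π).PosSemidef := by
  unfold infoMatrix
  refine Finset.sum_induction _ _ (fun a b ha hb => ha.add hb) Matrix.PosSemidef.zero ?_
  intro i _
  exact smul_posSemidef (vecMulVec_posSemidef _) (h i)

lemma psd_posDef_of_isUnit {A : Matrix (Fin d) (Fin d) ℝ} (hA : A.PosSemidef)
    (h : IsUnit A) : A.PosDef := by
  refine PosDef.of_dotProduct_mulVec_pos hA.1 fun x hx => ?_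
  rcases lt_or_eq_of_le (hA.dotProduct_mulVec_nonneg x) with h' | h'
  · exact h'
  · exfalso
    have hz : A *ᵥ x = 0 := (hA.dotProduct_mulVec_zero_iff x).mp h'.symm
    have hx0 : x = 0 := by
      have hinj := (Matrix.mulVec_injective_iff_isUnit (K := ℝ)).mpr h
      have := hinj (by simpa using hz : A *ᵥ x = A *ᵥ 0)
      simpa using this
    exact hx hx0

lemma psd_trace_nonneg {A : Matrix (Fin d) (Fin d) ℝ} (hA : A.PosSemidef) : 0 ≤ A.trace := by
  refine Finset.sum_nonneg fun i _ => ?_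
  have := hA.dotProduct_mulVec_nonneg (Pi.single i 1)
  simpa [dotProduct, mulVec, Pi.single_apply, Finset.sum_ite_eq, Finset.sum_ite_eq'] using this

lemma det_le_trace_div_pow {A : Matrix (Fin d) (Fin d) ℝ} (hd : 0 < d) (hA : A.PosSemidef) :
    A.det ≤ (A.trace / d) ^ d := by
  have hHerm := hA.1
  set lam := hHerm.eigenvalues with hlam
  have hnn : ∀ i, 0 ≤ lam i := fun i => hA.eigenvalues_nonneg i
  have hdet : A.det = ∏ i, lam i := by
    have := hHerm.det_eq_prod_eigenvalues
    simpa using this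
  have htr : A.trace = ∑ i, lam i := by
    have := hHerm.trace_eq_sum_eigenvalues
    simpa using this
  have key : ∏ i, lam i ^ ((1 : ℝ) / d) ≤ ∑ i, (1 / (d : ℝ)) * lam i := by
    refine Real.geom_mean_le_arith_mean_weighted Finset.univ (fun _ => 1 / (d : ℝ)) lam
      (fun i _ => by positivity) ?_ (fun i _ => hnn i)
    simp [Finset.card_univ]
    field_simp
  have hsum : ∑ i, (1 / (d : ℝ)) * lam i = A.trace / d := by
    rw [htr, ← Finset.mul_sum]; ring
  have hpow : (∏ i, lam i ^ ((1 : ℝ) / d)) ^ (d : ℕ) = ∏ i, lam i := by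
    rw [← Finset.prod_pow]
    refine Finset.prod_congr rfl fun i _ => ?_
    rw [← Real.rpow_natCast (lam i ^ ((1:ℝ)/d)) d, ← Real.rpow_mul (hnn i)]
    rw [one_div, inv_mul_cancel₀ (by exact_mod_cast hd.ne' : (d : ℝ) ≠ 0), Real.rpow_one]
  calc A.det = (∏ i, lam i ^ ((1 : ℝ) / d)) ^ (d : ℕ) := by rw [hpow, hdet]
    _ ≤ (A.trace / d) ^ d := by
        refine pow_le_pow_left₀ (Finset.prod_nonneg fun i _ => ?_) (hsum ▸ key) d
        exact Real.rpow_nonneg (hnn i) _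

lemma trace_mul_vecMulVec (A : Matrix (Fin d) (Fin d) ℝ) (u : Fin d → ℝ) :
    (A * vecMulVec u u).trace = u ⬝ᵥ A *ᵥ u := by
  simp [Matrix.trace, Matrix.diag, mul_apply, vecMulVec_apply, dotProduct, mulVec,
    Finset.mul_sum, Finset.sum_mul]
  congr 1; ext j; congr 1; ext l; ring

end Aux

open scoped MatrixOrder

theorem max_leverage_eq_dim_D_optimal {d k : ℕ} (hd : 0 < d) (hk : 0 < k)
    (φ : Fin k → (Fin d → ℝ))
    (hspan : Submodule.span ℝ (Set.range φ) = ⊤)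
    (π : Fin k → ℝ) (hπ : IsDesign π) (hinv : IsUnit (infoMatrix φ π))
    (hg : (⨆ i, φ i ⬝ᵥ (infoMatrix φ π)⁻¹ *ᵥ φ i) = (d : ℝ)) :
    ∀ π', IsDesign π' → (infoMatrix φ π').det ≤ (infoMatrix φ π).det := by
  intro π' hπ'
  set M := infoMatrix φ π with hM
  set M' := infoMatrix φ π' with hM'
  have hMpsd : M.PosSemidef := infoMatrix_posSemidef φ π hπ.1
  have hM'psd : M'.PosSemidef := infoMatrix_posSemidef φ π' hπ'.1
  have hMpd : M.PosDef := psd_posDef_of_isUnit hMpsd hinv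
  have hMinv_psd : M⁻¹.PosSemidef := hMpd.inv.posSemidef
  set S := CFC.sqrt M⁻¹ with hSdef
  have hSh : Sᴴ = S := (CFC.sqrt_nonneg M⁻¹).posSemidef.1
  have hSS : S * S = M⁻¹ := CFC.sqrt_mul_sqrt_self M⁻¹ hMinv_psd.nonneg
  have hN : (S * M' * S).PosSemidef := by
    have := hM'psd.mul_mul_conjTranspose_same S
    rwa [hSh] at this
  haveI : Nonempty (Fin k) := Fin.pos_iff_nonempty.mp hk
  have hlev : ∀ i, φ i ⬝ᵥ M⁻¹ *ᵥ φ i ≤ (d : ℝ) := by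
    intro i
    rw [← hg]
    exact le_ciSup (Set.Finite.bddAbove (Set.finite_range fun j => φ j ⬝ᵥ M⁻¹ *ᵥ φ j)) i
  have htrN : (S * M' * S).trace = ∑ i, π' i * (φ i ⬝ᵥ M⁻¹ *ᵥ φ i) := by
    rw [trace_mul_comm, ← mul_assoc, hSS]
    have hexp : M⁻¹ * M' = ∑ i, π' i • (M⁻¹ * vecMulVec (φ i) (φ i)) := by
      rw [hM', infoMatrix, Finset.mul_sum]
      exact Finset.sum_congr rfl fun i _ => (mul_smul_comm _ _ _)
    rw [hexp, trace_sum]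
    exact Finset.sum_congr rfl fun i _ => by rw [trace_smul, trace_mul_vecMulVec, smul_eq_mul]
  have htr_le : (S * M' * S).trace ≤ (d : ℝ) := by
    rw [htrN]
    calc ∑ i, π' i * (φ i ⬝ᵥ M⁻¹ *ᵥ φ i) ≤ ∑ i, π' i * d :=
          Finset.sum_le_sum fun i _ => mul_le_mul_of_nonneg_left (hlev i) (hπ'.1 i)
      _ = (d : ℝ) := by rw [← Finset.sum_mul, hπ'.2, one_mul]
  have hdetN_le : (S * M' * S).det ≤ 1 := by
    calc (S * M' * S).det ≤ ((S * M' * S).trace / d) ^ d := det_le_trace_div_pow hd hN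
      _ ≤ 1 ^ d := by
          refine pow_le_pow_left₀ (div_nonneg (psd_trace_nonneg hN) (by positivity)) ?_ d
          rw [div_le_one (by exact_mod_cast hd)]
          exact htr_le
      _ = 1 := one_pow d
  have hdetM : 0 < M.det := hMpd.det_pos
  have hdetN : (S * M' * S).det = M'.det / M.det := by
    rw [det_mul, det_mul]
    have h2 : S.det * S.det = (M.det)⁻¹ := by
      rw [← det_mul, hSS, det_nonsing_inv, Ring.inverse_eq_inv]
    calc S.det * M'.det * S.det = (S.det * S.det) * M'.det := by ring
      _ = (M.det)⁻¹ * M'.det := by rw [h2]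
      _ = M'.det / M.det := by ring
  rw [hdetN, div_le_one hdetM] at hdetN_le
  exact hdetN_le
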